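/- Assume d ≥ 2, that the digraphs Γ₂,…,Γ_d are all symmetric, and that m₂,…,m_d are all even. Let D_Γ(m⁻,u) be the matrix with rows and columns indexed by C⁻_Γ(⟨m⁻⟩) := C_{(Γ₂,…,Γ_d)}(⟨m⁻⟩), whose (i,j) entry equals exp((c(i)ᵀu + c(j)ᵀu)/2) if placing configuration i at level x₁ = 1 and configuration j at level x₁ = 2 yields a Γ-allowed coloring of ⟨(2,m⁻)⟩, and 0 otherwise. Then P_Γ(u) ≤ log ρ(D_Γ(m⁻,u))/vol(m⁻), where ρ is the spectral radius. -/

import Mathlib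

open Filter Topology Matrix
open scoped Classical

namespace Soft

/-! Basic notions for nearest-neighbour subshifts of finite type (NNSOFT) on `ℤ^d`:
boxes, allowed colorings, color counts, the grand partition function `Z_Γ(m,u)`. -/

/-- The set of sites of the box `⟨m⟩ = [m₁] × ⋯ × [m_d]` (zero-indexed). -/
def box {d : ℕ} (m : Fin d → ℕ) : Set (Fin d → ℕ) := {x | ∀ i, x i < m i}

/-- The site `x + e_k`. -/
def step {d : ℕ} (x : Fin d → ℕ) (k : Fin d) : Fin d → ℕ :=
  Function.update x k (x k + 1)

/-- `vol(m) = m₁ ⋯ m_d`. -/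
def vol {d : ℕ} (m : Fin d → ℕ) : ℕ := ∏ i, m i

/-- `φ` satisfies all nearest-neighbour constraints imposed by `Γ` inside the box `⟨m⟩`:
whenever `x` and `x + e_k` both lie in the box, `(φ x, φ (x + e_k)) ∈ Γ k`. -/
def Allowed {d n : ℕ} (Γ : Fin d → Set (Fin n × Fin n)) (m : Fin d → ℕ)
    (φ : (Fin d → ℕ) → Fin n) : Prop :=
  ∀ x ∈ box m, ∀ k : Fin d, step x k ∈ box m → (φ x, φ (step x k)) ∈ Γ k

/-- `φ` takes the default color `0` outside the box `⟨m⟩`; colorings of `⟨m⟩` are represented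
by functions on all of `ℕ^d` normalized in this way (so that there are finitely many). -/
def Normalized {d n : ℕ} [NeZero n] (m : Fin d → ℕ) (φ : (Fin d → ℕ) → Fin n) : Prop :=
  ∀ x, x ∉ box m → φ x = 0

/-- `C_Γ(⟨m⟩)`: the set of `Γ`-allowed colorings of the box `⟨m⟩`. -/
def Col {d n : ℕ} [NeZero n] (Γ : Fin d → Set (Fin n × Fin n)) (m : Fin d → ℕ) :
    Set ((Fin d → ℕ) → Fin n) :=
  {φ | Allowed Γ m φ ∧ Normalized m φ}

/-- `Γ`-allowed colorings of the whole lattice `ℤ^d`. -/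
def AllowedZ {d n : ℕ} (Γ : Fin d → Set (Fin n × Fin n)) (φ : (Fin d → ℤ) → Fin n) : Prop :=
  ∀ (x : Fin d → ℤ) (k : Fin d), (φ x, φ (Function.update x k (x k + 1))) ∈ Γ k

/-- `c(φ)_j`: the number of sites of `⟨m⟩` colored `j` by `φ`. -/
noncomputable def cnt {d n : ℕ} (m : Fin d → ℕ) (φ : (Fin d → ℕ) → Fin n) (j : Fin n) : ℕ :=
  Nat.card {x : Fin d → ℕ // x ∈ box m ∧ φ x = j}

/-- The weight `exp (c(φ)ᵀ u)` of a coloring `φ` of `⟨m⟩`. -/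
noncomputable def weight {d n : ℕ} (m : Fin d → ℕ) (φ : (Fin d → ℕ) → Fin n)
    (u : Fin n → ℝ) : ℝ :=
  Real.exp (∑ j, (cnt m φ j : ℝ) * u j)

/-- The grand partition function `Z_Γ(m,u) = Σ_{φ ∈ C_Γ(⟨m⟩)} exp (c(φ)ᵀ u)`. -/
noncomputable def Z {d n : ℕ} [NeZero n] (Γ : Fin d → Set (Fin n × Fin n)) (m : Fin d → ℕ)
    (u : Fin n → ℝ) : ℝ :=
  ∑' φ : Col Γ m, weight m φ.1 u

/-- The spectral radius of a real square matrix: the largest modulus of a (complex)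
eigenvalue. -/
noncomputable def specRad {N : Type*} [Fintype N] [DecidableEq N] (M : Matrix N N ℝ) : ℝ :=
  (spectralRadius ℂ (M.map (Complex.ofReal ·))).toReal

/-- There are finitely many (normalized) colorings of a box. -/
instance colFinite {d n : ℕ} [NeZero n] (Γ : Fin d → Set (Fin n × Fin n)) (m : Fin d → ℕ) :
    Finite (Col Γ m) := by
  have hinj : Function.Injective
      (fun (φ : Col Γ m) (x : (i : Fin d) → Fin (m i)) => φ.1 fun i => (x i).1) := by
    rintro ⟨φ, hφ⟩ ⟨ψ, hψ⟩ h
    apply Subtype.ext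
    funext x
    show φ x = ψ x
    by_cases hx : x ∈ box m
    · exact congrFun h (fun i => ⟨x i, hx i⟩)
    · rw [hφ.2 x hx, hψ.2 x hx]
  exact Finite.of_injective _ hinj

noncomputable instance colFintype {d n : ℕ} [NeZero n] (Γ : Fin d → Set (Fin n × Fin n))
    (m : Fin d → ℕ) : Fintype (Col Γ m) :=
  Fintype.ofFinite _

/-- The transfer matrix `D_Γ(m⁻,u)`: rows and columns are indexed by
`C⁻_Γ(⟨m⁻⟩) = C_{(Γ₂,…,Γ_d)}(⟨m⁻⟩)`; the `(i,j)` entry is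
`exp((c(i)ᵀu + c(j)ᵀu)/2)` if placing `i` at level `x₁ = 1` and `j` at level `x₁ = 2`
yields a `Γ`-allowed coloring of `⟨(2,m⁻)⟩` (i.e. `(i x, j x) ∈ Γ₁` for all sites `x`),
and `0` otherwise. -/
noncomputable def levelMat {d n : ℕ} [NeZero n] (Γ : Fin (d + 2) → Set (Fin n × Fin n))
    (mr : Fin (d + 1) → ℕ) (u : Fin n → ℝ) :
    Matrix (Col (fun i : Fin (d + 1) => Γ i.succ) mr)
           (Col (fun i : Fin (d + 1) => Γ i.succ) mr) ℝ :=
  Matrix.of fun φ ψ =>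
    (if ∀ x ∈ box mr, (φ.1 x, ψ.1 x) ∈ Γ 0 then (1 : ℝ) else 0) *
      Real.exp (((∑ j, (cnt mr φ.1 j : ℝ) * u j) + ∑ j, (cnt mr ψ.1 j : ℝ) * u j) / 2)

/-! ### Auxiliary material for the proof -/

attribute [local instance] Matrix.linftyOpNormedRing Matrix.linftyOpNormedAlgebra

section Aux

variable {d n : ℕ}

/-- Embedding of a block site into the big box. -/
def blk (mr : Fin (d + 1) → ℕ) (t : ℕ) (b y : Fin (d + 1) → ℕ) : Fin (d + 2) → ℕ :=
  Fin.cons t fun i => b i * mr i + y i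

lemma blk_mem {mr s : Fin (d + 1) → ℕ} {M t : ℕ} {b y : Fin (d + 1) → ℕ}
    (ht : t < M) (hb : ∀ i, b i < s i) (hy : y ∈ box mr) :
    blk mr t b y ∈ box (Fin.cons M fun i => s i * mr i) := by
  intro i
  induction i using Fin.cases with
  | zero => simpa [blk, box] using ht
  | succ k =>
    simp only [blk, box, Fin.cons_succ]
    calc b k * mr k + y k < b k * mr k + mr k := Nat.add_lt_add_left (hy k) _
      _ = (b k + 1) * mr k := by ring
      _ ≤ s k * mr k := Nat.mul_le_mul_right _ (hb k)

/-- The coloring of a block at height `t` induced by a coloring of the big box. -/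
noncomputable def layer [NeZero n] (mr : Fin (d + 1) → ℕ) (φ : (Fin (d + 2) → ℕ) → Fin n)
    (t : ℕ) (b : Fin (d + 1) → ℕ) : (Fin (d + 1) → ℕ) → Fin n :=
  fun y => if y ∈ box mr then φ (blk mr t b y) else 0

lemma blk_step {mr : Fin (d + 1) → ℕ} (t : ℕ) (b y : Fin (d + 1) → ℕ) (k : Fin (d + 1)) :
    blk mr t b (step y k) = step (blk mr t b y) k.succ := by
  funext i
  induction i using Fin.cases with
  | zero =>
    simp [blk, step, Function.update_of_ne (Fin.succ_ne_zero k).symm]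
  | succ j =>
    rcases eq_or_ne j k with rfl | h
    · simp only [blk, step, Fin.cons_succ, Function.update_self]
      omega
    · simp [blk, step, Function.update_of_ne h,
        Function.update_of_ne (fun hh => h (Fin.succ_injective _ hh))]

lemma blk_step0 {mr : Fin (d + 1) → ℕ} (t : ℕ) (b y : Fin (d + 1) → ℕ) :
    blk mr (t + 1) b y = step (blk mr t b y) 0 := by
  unfold blk step
  rw [Fin.cons_zero, Fin.update_cons_zero]

lemma layer_mem [NeZero n] {Γ : Fin (d + 2) → Set (Fin n × Fin n)} {mr s : Fin (d + 1) → ℕ}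
    {M : ℕ} {φ : (Fin (d + 2) → ℕ) → Fin n}
    (hφ : φ ∈ Col Γ (Fin.cons M fun i => s i * mr i))
    {t : ℕ} (ht : t < M) {b : Fin (d + 1) → ℕ} (hb : ∀ i, b i < s i) :
    layer mr φ t b ∈ Col (fun i : Fin (d + 1) => Γ i.succ) mr := by
  constructor
  · intro y hy k hyk
    have h1 : layer mr φ t b y = φ (blk mr t b y) := if_pos hy
    have h2 : layer mr φ t b (step y k) = φ (blk mr t b (step y k)) := if_pos hyk
    rw [h1, h2, blk_step]
    exact hφ.1 _ (blk_mem ht hb hy) k.succ (blk_step t b y k ▸ blk_mem ht hb hyk)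
  · intro y hy
    exact if_neg hy

lemma layer_compat [NeZero n] {Γ : Fin (d + 2) → Set (Fin n × Fin n)} {mr s : Fin (d + 1) → ℕ}
    {M : ℕ} {φ : (Fin (d + 2) → ℕ) → Fin n}
    (hφ : φ ∈ Col Γ (Fin.cons M fun i => s i * mr i))
    {t : ℕ} (ht : t + 1 < M) {b : Fin (d + 1) → ℕ} (hb : ∀ i, b i < s i) :
    ∀ y ∈ box mr, (layer mr φ t b y, layer mr φ (t + 1) b y) ∈ Γ 0 := by
  intro y hy
  have h1 : layer mr φ t b y = φ (blk mr t b y) := if_pos hy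
  have h2 : layer mr φ (t + 1) b y = φ (blk mr (t + 1) b y) := if_pos hy
  rw [h1, h2, blk_step0]
  exact hφ.1 _ (blk_mem (Nat.lt_of_succ_lt ht) hb hy) 0 (blk_step0 t b y ▸ blk_mem ht hb hy)

lemma finite_cntSet {d' : ℕ} (m : Fin d' → ℕ) (P : (Fin d' → ℕ) → Prop) :
    Finite {x : Fin d' → ℕ // x ∈ box m ∧ P x} := by
  have hinj : Function.Injective (fun z : {x : Fin d' → ℕ // x ∈ box m ∧ P x} =>
      (fun i => (⟨z.1 i, z.2.1 i⟩ : Fin (m i)) : ∀ i, Fin (m i))) := by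
    rintro ⟨x, hx⟩ ⟨y, hy⟩ h
    apply Subtype.ext
    funext i
    exact congrArg Fin.val (congrFun h i)
  exact Finite.of_injective _ hinj

lemma nat_card_sigma {ι : Type*} [Fintype ι] (f : ι → Type*) [∀ i, Finite (f i)] :
    Nat.card (Σ i, f i) = ∑ i, Nat.card (f i) := by
  letI := fun i => Fintype.ofFinite (f i)
  simp only [Nat.card_eq_fintype_card, Fintype.card_sigma]

lemma blk_divmod {mr : Fin (d + 1) → ℕ} (x : Fin (d + 2) → ℕ) :
    blk mr (x 0) (fun i => x i.succ / mr i) (fun i => x i.succ % mr i) = x := by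
  funext i
  induction i using Fin.cases with
  | zero => simp [blk]
  | succ k =>
    simp only [blk, Fin.cons_succ]
    rw [Nat.div_add_mod']

lemma cnt_decomp [NeZero n] {mr s : Fin (d + 1) → ℕ} (hmr : ∀ i, 0 < mr i) (M : ℕ)
    (φ : (Fin (d + 2) → ℕ) → Fin n) (j : Fin n) :
    cnt (Fin.cons M fun i => s i * mr i) φ j =
      ∑ t : Fin M, ∑ b : ∀ i, Fin (s i), cnt mr (layer mr φ t.1 fun i => (b i).1) j := by
  classical
  haveI : ∀ tb : Fin M × (∀ i, Fin (s i)), Finite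
      {y : Fin (d + 1) → ℕ // y ∈ box mr ∧ layer mr φ tb.1.1 (fun i => (tb.2 i).1) y = j} :=
    fun tb => finite_cntSet mr _
  have hdiv : ∀ (c r : ℕ) (k : Fin (d + 1)), r < mr k → (c * mr k + r) / mr k = c := by
    intro c r k hr
    rw [mul_comm, Nat.mul_add_div (hmr k), Nat.div_eq_of_lt hr, add_zero]
  have key : Nat.card {x : Fin (d + 2) → ℕ //
        x ∈ box (Fin.cons M fun i => s i * mr i) ∧ φ x = j}
      = Nat.card (Σ tb : Fin M × (∀ i, Fin (s i)),
          {y : Fin (d + 1) → ℕ // y ∈ box mr ∧ layer mr φ tb.1.1 (fun i => (tb.2 i).1) y = j}) := by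
    refine (Nat.card_eq_of_bijective (fun z =>
      ⟨blk mr z.1.1.1 (fun i => (z.1.2 i).1) z.2.1,
        blk_mem z.1.1.2 (fun i => (z.1.2 i).2) z.2.2.1, by
          have h := z.2.2.2
          rwa [layer, if_pos z.2.2.1] at h⟩) ⟨?_, ?_⟩).symm
    · rintro ⟨⟨t, b⟩, ⟨y, hy, hyj⟩⟩ ⟨⟨t', b'⟩, ⟨y', hy', hyj'⟩⟩ h
      have hx : blk mr t.1 (fun i => (b i).1) y = blk mr t'.1 (fun i => (b' i).1) y' :=
        congrArg Subtype.val h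
      have ht : t = t' := Fin.ext (by simpa [blk] using congrFun hx 0)
      have hcoord : ∀ k : Fin (d + 1), (b k).1 * mr k + y k = (b' k).1 * mr k + y' k := by
        intro k; simpa [blk] using congrFun hx k.succ
      have hb : b = b' := by
        funext k
        apply Fin.ext
        have h2 : ((b k).1 * mr k + y k) / mr k = ((b' k).1 * mr k + y' k) / mr k :=
          congrArg (· / mr k) (hcoord k)
        rwa [hdiv _ _ _ (hy k), hdiv _ _ _ (hy' k)] at h2
      have hyy : y = y' := by
        funext k
        have h3 := hcoord k
        rw [hb] at h3
        omega
      subst ht; subst hb; subst hyy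
      rfl
    · rintro ⟨x, hx, hxj⟩
      have hx0 : x 0 < M := by simpa using hx 0
      have hxs : ∀ i : Fin (d + 1), x i.succ < s i * mr i := fun i => by simpa using hx i.succ
      have hmem : (fun i => x i.succ % mr i) ∈ box mr := fun i => Nat.mod_lt _ (hmr i)
      refine ⟨⟨⟨⟨x 0, hx0⟩, fun i => ⟨x i.succ / mr i,
        (Nat.div_lt_iff_lt_mul (hmr i)).2 (hxs i)⟩⟩, ⟨fun i => x i.succ % mr i, hmem, ?_⟩⟩, ?_⟩
      · rw [layer, if_pos hmem]
        show φ (blk mr (x 0) (fun i => x i.succ / mr i) (fun i => x i.succ % mr i)) = j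
        rw [blk_divmod]
        exact hxj
      · exact Subtype.ext (blk_divmod x)
  rw [cnt, key, nat_card_sigma, Fintype.sum_prod_type]
  rfl

lemma layer_inj [NeZero n] {Γ : Fin (d + 2) → Set (Fin n × Fin n)} {mr s : Fin (d + 1) → ℕ}
    (hmr : ∀ i, 0 < mr i) {M : ℕ} {φ φ' : (Fin (d + 2) → ℕ) → Fin n}
    (hφ : φ ∈ Col Γ (Fin.cons M fun i => s i * mr i))
    (hφ' : φ' ∈ Col Γ (Fin.cons M fun i => s i * mr i))
    (h : ∀ t : Fin M, ∀ b : ∀ i, Fin (s i),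
      layer mr φ t.1 (fun i => (b i).1) = layer mr φ' t.1 (fun i => (b i).1)) :
    φ = φ' := by
  funext x
  by_cases hx : x ∈ box (Fin.cons M fun i => s i * mr i)
  · have hx0 : x 0 < M := by simpa using hx 0
    have hxs : ∀ i : Fin (d + 1), x i.succ < s i * mr i := fun i => by simpa using hx i.succ
    have hmem : (fun i => x i.succ % mr i) ∈ box mr := fun i => Nat.mod_lt _ (hmr i)
    have h2 := congrFun (h ⟨x 0, hx0⟩ (fun i => ⟨x i.succ / mr i,
      (Nat.div_lt_iff_lt_mul (hmr i)).2 (hxs i)⟩)) (fun i => x i.succ % mr i)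
    rw [layer, layer, if_pos hmem, if_pos hmem] at h2
    have hb : blk mr (x 0) (fun i => x i.succ / mr i) (fun i => x i.succ % mr i) = x :=
      blk_divmod x
    rw [hb] at h2
    exact h2
  · rw [hφ.2 x hx, hφ'.2 x hx]

lemma telescope (M : ℕ) (g : Fin (M + 1) → ℝ) :
    g 0 / 2 + (∑ t : Fin M, (g t.castSucc + g t.succ) / 2) + g (Fin.last M) / 2
      = ∑ t, g t := by
  have h1 : ∑ t : Fin (M + 1), g t = (∑ t : Fin M, g t.castSucc) + g (Fin.last M) :=
    Fin.sum_univ_castSucc g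
  have h2 : ∑ t : Fin (M + 1), g t = g 0 + ∑ t : Fin M, g t.succ := Fin.sum_univ_succ g
  have h3 : ∑ t : Fin M, (g t.castSucc + g t.succ) / 2
      = ((∑ t : Fin M, g t.castSucc) + ∑ t : Fin M, g t.succ) / 2 := by
    rw [← Finset.sum_div, Finset.sum_add_distrib]
  rw [h3]
  linarith

lemma path_sum {I : Type*} [Fintype I] [DecidableEq I] (D : Matrix I I ℝ) (h : I → ℝ) :
    ∀ (k : ℕ) (g : I → ℝ),
      (∑ p : Fin (k + 1) → I,
        (g (p 0) * ∏ t : Fin k, D (p t.castSucc) (p t.succ)) * h (p (Fin.last k)))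
      = ∑ i, ∑ j, (g i * (D ^ k) i j) * h j := by
  intro k
  induction k with
  | zero =>
    intro g
    rw [← ((Equiv.funUnique (Fin 1) I).symm.sum_comp
      (fun p : Fin 1 → I => (g (p 0) * ∏ t : Fin 0, D (p t.castSucc) (p t.succ))
        * h (p (Fin.last 0))))]
    simp [Matrix.one_apply]
  | succ k ih =>
    intro g
    have e := (Fin.consEquiv (fun _ : Fin (k + 2) => I)).sum_comp
      (fun p : Fin (k + 2) → I =>
        (g (p 0) * ∏ t : Fin (k + 1), D (p t.castSucc) (p t.succ)) * h (p (Fin.last (k + 1))))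
    rw [← e, Fintype.sum_prod_type]
    have step1 : ∀ a : I, ∀ q : Fin (k + 1) → I,
        (g ((Fin.consEquiv (fun _ : Fin (k + 2) => I)) (a, q) 0) *
          ∏ t : Fin (k + 1), D ((Fin.consEquiv (fun _ : Fin (k + 2) => I)) (a, q) t.castSucc)
            ((Fin.consEquiv (fun _ : Fin (k + 2) => I)) (a, q) t.succ)) *
          h ((Fin.consEquiv (fun _ : Fin (k + 2) => I)) (a, q) (Fin.last (k + 1)))
        = ((g a * D a (q 0)) * ∏ t : Fin k, D (q t.castSucc) (q t.succ)) * h (q (Fin.last k)) := by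
      intro a q
      have hc : ∀ i : Fin (k + 1), (Fin.consEquiv (fun _ : Fin (k + 2) => I)) (a, q) i.succ
          = q i := fun i => rfl
      have h0 : (Fin.consEquiv (fun _ : Fin (k + 2) => I)) (a, q) 0 = a := rfl
      have hprod : (∏ t : Fin (k + 1),
            D ((Fin.consEquiv (fun _ : Fin (k + 2) => I)) (a, q) t.castSucc)
              ((Fin.consEquiv (fun _ : Fin (k + 2) => I)) (a, q) t.succ))
          = D a (q 0) * ∏ t : Fin k, D (q t.castSucc) (q t.succ) := by
        rw [Fin.prod_univ_succ]
        congr 1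
      have hlast : (Fin.consEquiv (fun _ : Fin (k + 2) => I)) (a, q) (Fin.last (k + 1))
          = q (Fin.last k) := by
        rw [← Fin.succ_last, hc]
      rw [h0, hprod, hlast]
      ring
    calc ∑ a : I, ∑ q : Fin (k + 1) → I,
          (g ((Fin.consEquiv (fun _ : Fin (k + 2) => I)) (a, q) 0) *
            ∏ t : Fin (k + 1), D ((Fin.consEquiv (fun _ : Fin (k + 2) => I)) (a, q) t.castSucc)
              ((Fin.consEquiv (fun _ : Fin (k + 2) => I)) (a, q) t.succ)) *
            h ((Fin.consEquiv (fun _ : Fin (k + 2) => I)) (a, q) (Fin.last (k + 1)))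
        = ∑ a : I, ∑ q : Fin (k + 1) → I,
          (((fun i => g a * D a i) (q 0)) * ∏ t : Fin k, D (q t.castSucc) (q t.succ))
            * h (q (Fin.last k)) := by
          refine Finset.sum_congr rfl fun a _ => Finset.sum_congr rfl fun q _ => ?_
          exact step1 a q
      _ = ∑ a : I, ∑ i, ∑ j, ((g a * D a i) * (D ^ k) i j) * h j :=
          Finset.sum_congr rfl fun a _ => ih (fun i => g a * D a i)
      _ = ∑ i, ∑ j, (g i * (D ^ (k + 1)) i j) * h j := by
          refine Finset.sum_congr rfl fun a _ => ?_
          rw [Finset.sum_comm]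
          refine Finset.sum_congr rfl fun j _ => ?_
          rw [pow_succ', Matrix.mul_apply, Finset.mul_sum, Finset.sum_mul]
          exact Finset.sum_congr rfl fun i _ => by ring

lemma pow_entry_nonneg {I : Type*} [Fintype I] [DecidableEq I] {D : Matrix I I ℝ}
    (hD : ∀ i j, 0 ≤ D i j) : ∀ (k : ℕ) (i j : I), 0 ≤ (D ^ k) i j := by
  intro k
  induction k with
  | zero =>
    intro i j
    rw [pow_zero]
    by_cases h : i = j <;> simp [Matrix.one_apply, h]
  | succ k ih =>
    intro i j
    rw [pow_succ', Matrix.mul_apply]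
    exact Finset.sum_nonneg fun a _ => mul_nonneg (hD i a) (ih a j)

lemma path_le_pow_entry {I : Type*} [Fintype I] [DecidableEq I] {D : Matrix I I ℝ}
    (hD : ∀ i j, 0 ≤ D i j) : ∀ (k : ℕ) (p : ℕ → I),
    (∏ t ∈ Finset.range k, D (p t) (p (t + 1))) ≤ (D ^ k) (p 0) (p k) := by
  intro k
  induction k with
  | zero => intro p; simp [Matrix.one_apply]
  | succ k ih =>
    intro p
    rw [Finset.prod_range_succ', pow_succ', Matrix.mul_apply]
    have h1 : (∏ t ∈ Finset.range k, D (p (t + 1)) (p (t + 1 + 1))) * D (p 0) (p 1)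
        ≤ (D ^ k) (p 1) (p (k + 1)) * D (p 0) (p 1) :=
      mul_le_mul_of_nonneg_right (ih fun t => p (t + 1)) (hD _ _)
    refine le_trans h1 ?_
    rw [mul_comm]
    exact Finset.single_le_sum
      (f := fun a => D (p 0) a * (D ^ k) a (p (k + 1)))
      (fun a _ => mul_nonneg (hD _ _) (pow_entry_nonneg hD _ _ _)) (Finset.mem_univ (p 1))

lemma entry_le_norm {I : Type*} [Fintype I] [DecidableEq I] (M : Matrix I I ℂ) (i j : I) :
    ‖M i j‖ ≤ ‖M‖ := by
  rw [Matrix.linfty_opNorm_def]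
  have h1 : ‖M i j‖₊ ≤ ∑ j', ‖M i j'‖₊ :=
    Finset.single_le_sum (f := fun j' => ‖M i j'‖₊) (fun _ _ => zero_le) (Finset.mem_univ j)
  have h2 : (∑ j', ‖M i j'‖₊) ≤ Finset.univ.sup fun i => ∑ j', ‖M i j'‖₊ :=
    Finset.le_sup (f := fun i => ∑ j', ‖M i j'‖₊) (Finset.mem_univ i)
  exact_mod_cast h1.trans h2

lemma map_ofReal_pow {I : Type*} [Fintype I] [DecidableEq I] (D : Matrix I I ℝ) (k : ℕ) :
    (D ^ k).map (Complex.ofReal ·) = (D.map (Complex.ofReal ·)) ^ k := by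
  have h1 : (D ^ k).map (Complex.ofReal ·) = Complex.ofRealHom.mapMatrix (D ^ k) := rfl
  have h2 : D.map (Complex.ofReal ·) = Complex.ofRealHom.mapMatrix D := rfl
  rw [h1, h2]
  exact map_pow _ D k

lemma restrict_mem_Col {d' : ℕ} [NeZero n] {Γ : Fin d' → Set (Fin n × Fin n)}
    {φZ : (Fin d' → ℤ) → Fin n} (hZ : AllowedZ Γ φZ) (m : Fin d' → ℕ) :
    (fun x => if x ∈ box m then φZ (fun i => (x i : ℤ)) else 0) ∈ Col Γ m := by
  constructor
  · intro x hx k hxk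
    show ((if x ∈ box m then φZ (fun i => (x i : ℤ)) else 0),
      (if step x k ∈ box m then φZ (fun i => ((step x k) i : ℤ)) else 0)) ∈ Γ k
    rw [if_pos hx, if_pos hxk]
    have hupd : (fun i => ((step x k) i : ℤ))
        = Function.update (fun i => (x i : ℤ)) k ((x k : ℤ) + 1) := by
      funext i
      rcases eq_or_ne i k with rfl | h
      · simp [step, Function.update_self]
      · simp [step, Function.update_of_ne h]
    rw [hupd]
    exact hZ (fun i => (x i : ℤ)) k
  · intro x hx
    exact if_neg hx

lemma Z_pos {d' : ℕ} [NeZero n] {Γ : Fin d' → Set (Fin n × Fin n)}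
    (hne : ∃ φZ : (Fin d' → ℤ) → Fin n, AllowedZ Γ φZ) (m : Fin d' → ℕ) (u : Fin n → ℝ) :
    0 < Z Γ m u := by
  obtain ⟨φZ, hZ⟩ := hne
  haveI : Nonempty ↥(Col Γ m) := ⟨⟨_, restrict_mem_Col hZ m⟩⟩
  rw [Z, tsum_fintype]
  exact Finset.sum_pos (fun φ _ => Real.exp_pos _) Finset.univ_nonempty

lemma zlayer_mem [NeZero n] {Γ : Fin (d + 2) → Set (Fin n × Fin n)}
    {φZ : (Fin (d + 2) → ℤ) → Fin n} (hZ : AllowedZ Γ φZ) (mr : Fin (d + 1) → ℕ) (t : ℕ) :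
    (fun y => if y ∈ box mr then φZ (Fin.cons (t : ℤ) fun i => (y i : ℤ)) else 0)
      ∈ Col (fun i : Fin (d + 1) => Γ i.succ) mr := by
  constructor
  · intro y hy k hyk
    show ((if y ∈ box mr then φZ (Fin.cons (t : ℤ) fun i => (y i : ℤ)) else 0),
      (if step y k ∈ box mr then φZ (Fin.cons (t : ℤ) fun i => ((step y k) i : ℤ)) else 0))
      ∈ Γ k.succ
    rw [if_pos hy, if_pos hyk]
    set X : Fin (d + 2) → ℤ := Fin.cons (t : ℤ) fun i => (y i : ℤ) with hX
    have hupd : (Fin.cons (t : ℤ) (fun i => ((step y k) i : ℤ)) : Fin (d + 2) → ℤ)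
        = Function.update X k.succ (X k.succ + 1) := by
      have h1 : X k.succ = (y k : ℤ) := rfl
      rw [h1, hX]
      funext i
      induction i using Fin.cases with
      | zero => simp [Function.update_of_ne (Fin.succ_ne_zero k).symm]
      | succ j =>
        rcases eq_or_ne j k with rfl | h
        · simp [step, Function.update_self]
        · simp [step, Function.update_of_ne h,
            Function.update_of_ne (fun hh => h (Fin.succ_injective _ hh))]
    rw [hupd]
    exact hZ X k.succ
  · intro y hy
    exact if_neg hy

lemma zlayer_compat [NeZero n] {Γ : Fin (d + 2) → Set (Fin n × Fin n)}
    {φZ : (Fin (d + 2) → ℤ) → Fin n} (hZ : AllowedZ Γ φZ) (mr : Fin (d + 1) → ℕ) (t : ℕ) :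
    ∀ y ∈ box mr,
      ((if y ∈ box mr then φZ (Fin.cons (t : ℤ) fun i => (y i : ℤ)) else 0),
       (if y ∈ box mr then φZ (Fin.cons ((t + 1 : ℕ) : ℤ) fun i => (y i : ℤ)) else 0)) ∈ Γ 0 := by
  intro y hy
  rw [if_pos hy, if_pos hy]
  set X : Fin (d + 2) → ℤ := Fin.cons (t : ℤ) fun i => (y i : ℤ) with hX
  have h0 : (Fin.cons ((t + 1 : ℕ) : ℤ) (fun i => (y i : ℤ)) : Fin (d + 2) → ℤ)
      = Function.update X 0 (X 0 + 1) := by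
    have h1 : X 0 = (t : ℤ) := rfl
    rw [h1, hX, Fin.update_cons_zero]
    have hc : ((t + 1 : ℕ) : ℤ) = (t : ℤ) + 1 := by push_cast; ring
    rw [hc]
  rw [h0]
  exact hZ X 0

/-- The exponent `c(ψ)ᵀu`. -/
noncomputable def cE [NeZero n] (mr : Fin (d + 1) → ℕ) (u : Fin n → ℝ)
    (ψ : (Fin (d + 1) → ℕ) → Fin n) : ℝ :=
  ∑ j, (cnt mr ψ j : ℝ) * u j

/-- The weight of a path of layer configurations. -/
noncomputable def pathW [NeZero n] (Γ : Fin (d + 2) → Set (Fin n × Fin n))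
    (mr : Fin (d + 1) → ℕ) (u : Fin n → ℝ) {M : ℕ}
    (p : Fin (M + 1) → ↥(Col (fun i : Fin (d + 1) => Γ i.succ) mr)) : ℝ :=
  (Real.exp (cE mr u (p 0).1 / 2) *
      ∏ t : Fin M, levelMat Γ mr u (p t.castSucc) (p t.succ)) *
    Real.exp (cE mr u (p (Fin.last M)).1 / 2)

lemma pathW_nonneg [NeZero n] (Γ : Fin (d + 2) → Set (Fin n × Fin n))
    (mr : Fin (d + 1) → ℕ) (u : Fin n → ℝ) {M : ℕ}
    (p : Fin (M + 1) → ↥(Col (fun i : Fin (d + 1) => Γ i.succ) mr)) : 0 ≤ pathW Γ mr u p := by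
  refine mul_nonneg (mul_nonneg (Real.exp_nonneg _)
    (Finset.prod_nonneg fun t _ => ?_)) (Real.exp_nonneg _)
  show (0 : ℝ) ≤ (if _ then (1 : ℝ) else 0) * Real.exp _
  split_ifs <;> simp [Real.exp_nonneg]

set_option maxHeartbeats 2000000 in
lemma Z_le_pathSum {d n : ℕ} [NeZero n] (Γ : Fin (d + 2) → Set (Fin n × Fin n))
    (mr : Fin (d + 1) → ℕ) (hmr : ∀ i, 0 < mr i) (u : Fin n → ℝ) (M : ℕ)
    (s : Fin (d + 1) → ℕ) :
    Z Γ (Fin.cons (M + 1) fun i => s i * mr i) u ≤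
      (∑ p : Fin (M + 1) → ↥(Col (fun i : Fin (d + 1) => Γ i.succ) mr),
        pathW Γ mr u p) ^ (∏ i, s i) := by
  classical
  set I := ↥(Col (fun i : Fin (d + 1) => Γ i.succ) mr) with hI
  set m : Fin (d + 2) → ℕ := Fin.cons (M + 1) fun i => s i * mr i with hm
  let B := ∀ i : Fin (d + 1), Fin (s i)
  let Ψ : ↥(Col Γ m) → B → Fin (M + 1) → I := fun φ b t =>
    ⟨layer mr φ.1 t.1 (fun i => (b i).1), layer_mem φ.2 t.2 (fun i => (b i).2)⟩
  have hweight : ∀ φ : ↥(Col Γ m), weight m φ.1 u = ∏ b : B, pathW Γ mr u (Ψ φ b) := by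
    intro φ
    have key : ∀ b : B,
        pathW Γ mr u (Ψ φ b) = Real.exp (∑ t : Fin (M + 1), cE mr u ((Ψ φ b t).1)) := by
      intro b
      have hD : ∀ t : Fin M, levelMat Γ mr u (Ψ φ b t.castSucc) (Ψ φ b t.succ)
          = Real.exp ((cE mr u ((Ψ φ b t.castSucc).1) + cE mr u ((Ψ φ b t.succ).1)) / 2) := by
        intro t
        have hcond : ∀ x ∈ box mr, ((Ψ φ b t.castSucc).1 x, (Ψ φ b t.succ).1 x) ∈ Γ 0 :=
          layer_compat φ.2 (Nat.succ_lt_succ t.2) (fun i => (b i).2)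
        show (if _ then (1 : ℝ) else 0) * Real.exp _ = _
        rw [if_pos hcond, one_mul]
        rfl
      rw [pathW]
      simp only [hD]
      rw [← Real.exp_sum, ← Real.exp_add, ← Real.exp_add]
      exact congrArg Real.exp (telescope M fun t => cE mr u ((Ψ φ b t).1))
    have hcnt : ∀ j, (cnt m φ.1 j : ℝ)
        = ∑ t : Fin (M + 1), ∑ b : B, (cnt mr ((Ψ φ b t).1) j : ℝ) := by
      intro j
      exact_mod_cast cnt_decomp hmr (M + 1) φ.1 j
    have hswap : ∑ j, (cnt m φ.1 j : ℝ) * u j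
        = ∑ b : B, ∑ t : Fin (M + 1), cE mr u ((Ψ φ b t).1) := by
      have swap1 : ∀ f : Fin n → Fin (M + 1) → B → ℝ,
          (∑ j, ∑ t, ∑ b, f j t b) = ∑ b, ∑ t, ∑ j, f j t b := by
        intro f
        rw [Finset.sum_comm]
        rw [show (∑ t : Fin (M + 1), ∑ j, ∑ b, f j t b) = ∑ t, ∑ b, ∑ j, f j t b from
          Finset.sum_congr rfl fun t _ => Finset.sum_comm]
        exact Finset.sum_comm
      calc ∑ j, (cnt m φ.1 j : ℝ) * u j
          = ∑ j, ∑ t : Fin (M + 1), ∑ b : B, (cnt mr ((Ψ φ b t).1) j : ℝ) * u j := by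
            refine Finset.sum_congr rfl fun j _ => ?_
            rw [hcnt j, Finset.sum_mul]
            exact Finset.sum_congr rfl fun t _ => by rw [Finset.sum_mul]
        _ = ∑ b : B, ∑ t : Fin (M + 1), ∑ j, (cnt mr ((Ψ φ b t).1) j : ℝ) * u j :=
            swap1 _
        _ = ∑ b : B, ∑ t : Fin (M + 1), cE mr u ((Ψ φ b t).1) := rfl
    rw [weight, hswap, Real.exp_sum]
    exact Finset.prod_congr rfl fun b _ => (key b).symm
  have hinj : Function.Injective Ψ := by
    intro φ φ' h
    apply Subtype.ext
    refine layer_inj hmr φ.2 φ'.2 fun t b => ?_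
    exact congrArg Subtype.val (congrFun (congrFun h b) t)
  have hZeq : Z Γ m u = ∑ φ : ↥(Col Γ m), weight m φ.1 u := tsum_fintype _
  have hcard : Fintype.card B = ∏ i, s i := by
    simp [B]
  calc Z Γ m u = ∑ φ : ↥(Col Γ m), ∏ b : B, pathW Γ mr u (Ψ φ b) := by
        rw [hZeq]; exact Finset.sum_congr rfl fun φ _ => hweight φ
    _ = ∑ F ∈ Finset.univ.image Ψ, ∏ b : B, pathW Γ mr u (F b) :=
        (Finset.sum_image (f := fun F : B → Fin (M + 1) → I => ∏ b : B, pathW Γ mr u (F b)) (g := Ψ)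
          fun x _ y _ hxy => hinj hxy).symm
    _ ≤ ∑ F : B → Fin (M + 1) → I, ∏ b : B, pathW Γ mr u (F b) :=
        Finset.sum_le_sum_of_subset_of_nonneg (Finset.subset_univ _)
          fun F _ _ => Finset.prod_nonneg fun b _ => pathW_nonneg Γ mr u _
    _ = (∑ p : Fin (M + 1) → I, pathW Γ mr u p) ^ (∏ i, s i) := by
        rw [← Fintype.piFinset_univ, ← Finset.prod_univ_sum, Finset.prod_const,
          Finset.card_univ, hcard]

end Aux

set_option maxHeartbeats 3000000 in
/-- Assume `d ≥ 2` (formalized as total dimension `d + 2`), the digraphs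
`Γ₂,…,Γ_d` all symmetric and `m₂,…,m_d` all even.  Then
`P_Γ(u) ≤ log ρ(D_Γ(m⁻,u)) / vol(m⁻)`. -/
theorem pressure_le_log_specRad_transfer
    (d n : ℕ) [NeZero n]
    (Γ : Fin (d + 2) → Set (Fin n × Fin n))
    (hne : ∃ φ : (Fin (d + 2) → ℤ) → Fin n, AllowedZ Γ φ)
    (hsym : ∀ k : Fin (d + 1), ∀ a b : Fin n, (a, b) ∈ Γ k.succ → (b, a) ∈ Γ k.succ)
    (P : (Fin n → ℝ) → ℝ)
    (hP : ∀ u, Tendsto (fun m : Fin (d + 2) → ℕ =>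
        Real.log (Z Γ m u) / (vol m : ℝ)) atTop (𝓝 (P u)))
    (mr : Fin (d + 1) → ℕ) (hpos : ∀ i, 0 < mr i) (heven : ∀ i, Even (mr i))
    (u : Fin n → ℝ) :
    P u ≤ Real.log (specRad (levelMat Γ mr u)) / (vol mr : ℝ) := by
  classical
  obtain ⟨φZ, hZ⟩ := hne
  set I := ↥(Col (fun i : Fin (d + 1) => Γ i.succ) mr) with hIdef
  set D : Matrix I I ℝ := levelMat Γ mr u with hD
  set A : Matrix I I ℂ := D.map (Complex.ofReal ·) with hA
  haveI : CompleteSpace (Matrix I I ℂ) := FiniteDimensional.complete ℂ _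
  -- positivity of the box volume
  have hvolpos : 0 < vol mr := Finset.prod_pos fun i _ => hpos i
  have hvolR : (0 : ℝ) < (vol mr : ℝ) := by exact_mod_cast hvolpos
  -- nonnegative entries
  have hDnn : ∀ i j : I, 0 ≤ D i j := by
    intro i j
    show (0 : ℝ) ≤ (if _ then (1 : ℝ) else 0) * Real.exp _
    split_ifs <;> simp [Real.exp_nonneg]
  -- a positive path from the ℤ^d coloring
  set p : ℕ → I := fun t =>
    ⟨fun y => if y ∈ box mr then φZ (Fin.cons (t : ℤ) fun i => (y i : ℤ)) else 0,
      zlayer_mem hZ mr t⟩ with hp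
  haveI : Nonempty I := ⟨p 0⟩
  have hppos : ∀ t : ℕ, 0 < D (p t) (p (t + 1)) := by
    intro t
    show (0 : ℝ) < (if _ then (1 : ℝ) else 0) * Real.exp _
    rw [if_pos (zlayer_compat hZ mr t), one_mul]
    exact Real.exp_pos _
  -- the minimal positive entry
  set Q : Finset (I × I) := Finset.univ.filter (fun q => 0 < D q.1 q.2) with hQ
  have hQne : Q.Nonempty := ⟨(p 0, p 1), by
    rw [hQ, Finset.mem_filter]
    exact ⟨Finset.mem_univ _, hppos 0⟩⟩
  set ε : ℝ := Q.inf' hQne (fun q => D q.1 q.2) with hε'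
  have hε : 0 < ε := by
    rw [hε', Finset.lt_inf'_iff]
    intro q hq
    exact (Finset.mem_filter.1 hq).2
  have hεle : ∀ t : ℕ, ε ≤ D (p t) (p (t + 1)) := by
    intro t
    have hmem : (p t, p (t + 1)) ∈ Q := by
      rw [hQ, Finset.mem_filter]
      exact ⟨Finset.mem_univ _, hppos t⟩
    exact Finset.inf'_le (f := fun q : I × I => D q.1 q.2) hmem
  -- matrix powers
  have hApow : ∀ N : ℕ, A ^ N = (D ^ N).map (Complex.ofReal ·) :=
    fun N => (map_ofReal_pow D N).symm
  have hAnorm : ∀ (N : ℕ) (i j : I), (D ^ N) i j ≤ ‖A ^ N‖ := by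
    intro N i j
    have h1 : ‖(A ^ N) i j‖ ≤ ‖A ^ N‖ := entry_le_norm _ i j
    have h2 : ‖(A ^ N) i j‖ = |(D ^ N) i j| := by
      rw [hApow N]
      simp [Matrix.map_apply, Complex.norm_real]
    calc (D ^ N) i j ≤ |(D ^ N) i j| := le_abs_self _
      _ = ‖(A ^ N) i j‖ := h2.symm
      _ ≤ ‖A ^ N‖ := h1
  have hAnpos : ∀ N : ℕ, ε ^ N ≤ ‖A ^ N‖ := by
    intro N
    have h1 : ε ^ N ≤ ∏ t ∈ Finset.range N, D (p t) (p (t + 1)) := by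
      calc ε ^ N = ∏ _t ∈ Finset.range N, ε := by
            rw [Finset.prod_const, Finset.card_range]
        _ ≤ ∏ t ∈ Finset.range N, D (p t) (p (t + 1)) :=
            Finset.prod_le_prod (fun _ _ => hε.le) (fun t _ => hεle t)
    calc ε ^ N ≤ (D ^ N) (p 0) (p N) := h1.trans (path_le_pow_entry hDnn N p)
      _ ≤ ‖A ^ N‖ := hAnorm N _ _
  have hApos : ∀ N : ℕ, (0 : ℝ) < ‖A ^ N‖ := fun N => lt_of_lt_of_le (pow_pos hε N) (hAnpos N)
  -- the spectral radius
  set r : ℝ := specRad (levelMat Γ mr u) with hrdef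
  have hρfin : spectralRadius ℂ A ≠ ⊤ :=
    ne_top_of_le_ne_top ENNReal.coe_ne_top (spectrum.spectralRadius_le_nnnorm (𝕜 := ℂ) A)
  have hrr : r = (spectralRadius ℂ A).toReal := rfl
  have hgel := spectrum.pow_nnnorm_pow_one_div_tendsto_nhds_spectralRadius A
  have htoReal := (ENNReal.tendsto_toReal hρfin).comp hgel
  have hseq : ∀ N : ℕ, (((‖A ^ N‖₊ : ENNReal)) ^ (1 / (N : ℝ))).toReal = ‖A ^ N‖ ^ (1 / (N : ℝ)) := by
    intro N
    rw [← ENNReal.toReal_rpow, ENNReal.coe_toReal, coe_nnnorm]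
  have hr2 : Tendsto (fun N : ℕ => ‖A ^ N‖ ^ (1 / (N : ℝ))) atTop (𝓝 r) := by
    rw [hrr]
    exact Filter.Tendsto.congr hseq htoReal
  have hev : ∀ᶠ N : ℕ in atTop, ε ≤ ‖A ^ N‖ ^ (1 / (N : ℝ)) := by
    filter_upwards [Filter.eventually_ge_atTop 1] with N hN
    have hN0 : ((N : ℝ)) ≠ 0 := by
      have : (0 : ℝ) < (N : ℝ) := by exact_mod_cast hN
      exact this.ne'
    have h1 : (ε ^ N : ℝ) ^ (1 / (N : ℝ)) ≤ ‖A ^ N‖ ^ (1 / (N : ℝ)) :=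
      Real.rpow_le_rpow (pow_nonneg hε.le N) (hAnpos N) (by positivity)
    have h2 : (ε ^ N : ℝ) ^ (1 / (N : ℝ)) = ε := by
      rw [← Real.rpow_natCast ε N, ← Real.rpow_mul hε.le, mul_one_div, div_self hN0,
        Real.rpow_one]
    rwa [h2] at h1
  have hrpos : 0 < r := lt_of_lt_of_le hε (ge_of_tendsto hr2 hev)
  have hlog : Tendsto (fun N : ℕ => Real.log (‖A ^ N‖ ^ (1 / (N : ℝ)))) atTop
      (𝓝 (Real.log r)) := ((Real.continuousAt_log hrpos.ne').tendsto).comp hr2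
  have hfrac : Tendsto (fun N : ℕ => (N : ℝ) / ((N : ℝ) + 1)) atTop (𝓝 1) := by
    have h0 : Tendsto (fun N : ℕ => 1 - 1 / ((N : ℝ) + 1)) atTop (𝓝 (1 - 0)) :=
      tendsto_const_nhds.sub tendsto_one_div_add_atTop_nhds_zero_nat
    rw [sub_zero] at h0
    refine Filter.Tendsto.congr (fun N => ?_) h0
    have hN : ((N : ℝ) + 1) ≠ 0 := by positivity
    field_simp
    ring
  have hmul := hfrac.mul hlog
  rw [one_mul] at hmul
  have hq : Tendsto (fun N : ℕ => Real.log ‖A ^ N‖ / ((N : ℝ) + 1)) atTop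
      (𝓝 (Real.log r)) := by
    refine Filter.Tendsto.congr' ?_ hmul
    filter_upwards [Filter.eventually_ge_atTop 1] with N hN
    have hN0 : ((N : ℝ)) ≠ 0 := by
      have : (0 : ℝ) < (N : ℝ) := by exact_mod_cast hN
      exact this.ne'
    rw [Real.log_rpow (hApos N)]
    field_simp
  -- the weight vector and the constant KK
  set v : I → ℝ := fun ψ => Real.exp (cE mr u ψ.1 / 2) with hv
  set KK : ℝ := ∑ i : I, ∑ j : I, v i * v j with hKK
  have hKKpos : 0 < KK := by
    rw [hKK]
    exact Finset.sum_pos (fun i _ => Finset.sum_pos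
      (fun j _ => mul_pos (Real.exp_pos _) (Real.exp_pos _)) Finset.univ_nonempty)
      Finset.univ_nonempty
  have hSeq : ∀ N : ℕ, (∑ p' : Fin (N + 1) → I, pathW Γ mr u p')
      = ∑ i, ∑ j, (v i * (D ^ N) i j) * v j := by
    intro N
    exact Eq.trans (Finset.sum_congr rfl fun p' _ => rfl) (path_sum D v N v)
  have hSle : ∀ N : ℕ, (∑ p' : Fin (N + 1) → I, pathW Γ mr u p') ≤ KK * ‖A ^ N‖ := by
    intro N
    rw [hSeq N, hKK, Finset.sum_mul]
    refine Finset.sum_le_sum fun i _ => ?_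
    rw [Finset.sum_mul]
    refine Finset.sum_le_sum fun j _ => ?_
    calc (v i * (D ^ N) i j) * v j = (v i * v j) * (D ^ N) i j := by ring
      _ ≤ (v i * v j) * ‖A ^ N‖ :=
          mul_le_mul_of_nonneg_left (hAnorm N i j)
            (mul_nonneg (Real.exp_nonneg _) (Real.exp_nonneg _))
  -- the sequence of boxes
  set mfun : ℕ → (Fin (d + 2) → ℕ) := fun N => Fin.cons (N + 1) (fun i => (N + 1) * mr i)
    with hmfun
  have hmf : Tendsto mfun atTop atTop := by
    rw [Filter.tendsto_atTop]
    intro bb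
    filter_upwards [Filter.eventually_ge_atTop (∑ i, bb i)] with N hN
    intro i
    rw [hmfun]
    induction i using Fin.cases with
    | zero =>
      simp only [Fin.cons_zero]
      have h := Finset.single_le_sum (f := bb) (fun _ _ => Nat.zero_le _) (Finset.mem_univ 0)
      omega
    | succ k =>
      simp only [Fin.cons_succ]
      have h := Finset.single_le_sum (f := bb) (fun _ _ => Nat.zero_le _)
        (Finset.mem_univ k.succ)
      calc bb k.succ ≤ N + 1 := by omega
        _ ≤ (N + 1) * mr k := Nat.le_mul_of_pos_right _ (hpos k)
  have hvolm : ∀ N : ℕ, (vol (mfun N) : ℝ)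
      = ((N : ℝ) + 1) * (((N : ℝ) + 1) ^ (d + 1) * (vol mr : ℝ)) := by
    intro N
    have h1 : vol (mfun N) = (N + 1) * ((N + 1) ^ (d + 1) * vol mr) := by
      show (∏ i : Fin (d + 2), Fin.cons (N + 1) (fun i => (N + 1) * mr i) i) = _
      rw [Fin.prod_univ_succ]
      simp only [Fin.cons_zero, Fin.cons_succ]
      rw [Finset.prod_mul_distrib, Finset.prod_const, Finset.card_univ, Fintype.card_fin]
      rfl
    rw [h1]
    push_cast
    ring
  -- the two sequences and their comparison
  set a : ℕ → ℝ := fun N => Real.log (Z Γ (mfun N) u) / (vol (mfun N) : ℝ) with ha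
  set b : ℕ → ℝ := fun N =>
    (Real.log KK + Real.log ‖A ^ N‖) / (((N : ℝ) + 1) * (vol mr : ℝ)) with hb
  have hab : ∀ N : ℕ, a N ≤ b N := by
    intro N
    have hZp : 0 < Z Γ (mfun N) u := Z_pos ⟨φZ, hZ⟩ (mfun N) u
    have hSnn : 0 ≤ ∑ p' : Fin (N + 1) → I, pathW Γ mr u p' :=
      Finset.sum_nonneg fun p' _ => pathW_nonneg Γ mr u p'
    have hprodconst : (∏ _i : Fin (d + 1), (N + 1)) = (N + 1) ^ (d + 1) := by
      rw [Finset.prod_const, Finset.card_univ, Fintype.card_fin]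
    have hZle : Z Γ (mfun N) u ≤ (KK * ‖A ^ N‖) ^ ((N + 1) ^ (d + 1)) := by
      calc Z Γ (mfun N) u
          ≤ (∑ p' : Fin (N + 1) → I, pathW Γ mr u p') ^ (∏ _i : Fin (d + 1), (N + 1)) :=
            Z_le_pathSum Γ mr hpos u N (fun _ => N + 1)
        _ = (∑ p' : Fin (N + 1) → I, pathW Γ mr u p') ^ ((N + 1) ^ (d + 1)) := by
            rw [hprodconst]
        _ ≤ (KK * ‖A ^ N‖) ^ ((N + 1) ^ (d + 1)) :=
            pow_le_pow_left₀ hSnn (hSle N) _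
    have hKA : (0 : ℝ) < KK * ‖A ^ N‖ := mul_pos hKKpos (hApos N)
    have hlogZ : Real.log (Z Γ (mfun N) u)
        ≤ (((N : ℝ) + 1) ^ (d + 1)) * (Real.log KK + Real.log ‖A ^ N‖) := by
      calc Real.log (Z Γ (mfun N) u)
          ≤ Real.log ((KK * ‖A ^ N‖) ^ ((N + 1) ^ (d + 1))) := Real.log_le_log hZp hZle
        _ = (((N + 1) ^ (d + 1) : ℕ) : ℝ) * Real.log (KK * ‖A ^ N‖) := Real.log_pow _ _
        _ = (((N : ℝ) + 1) ^ (d + 1)) * (Real.log KK + Real.log ‖A ^ N‖) := by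
            rw [Real.log_mul hKKpos.ne' (hApos N).ne']
            push_cast
            ring
    have hden : (0 : ℝ) < ((N : ℝ) + 1) * (((N : ℝ) + 1) ^ (d + 1) * (vol mr : ℝ)) := by
      positivity
    have key : a N ≤ (((N : ℝ) + 1) ^ (d + 1) * (Real.log KK + Real.log ‖A ^ N‖))
        / (((N : ℝ) + 1) * (((N : ℝ) + 1) ^ (d + 1) * (vol mr : ℝ))) := by
      rw [ha]
      simp only []
      rw [hvolm N]
      exact (div_le_div_iff_of_pos_right hden).2 hlogZ
    have keyeq : (((N : ℝ) + 1) ^ (d + 1) * (Real.log KK + Real.log ‖A ^ N‖))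
        / (((N : ℝ) + 1) * (((N : ℝ) + 1) ^ (d + 1) * (vol mr : ℝ)))
        = b N := by
      rw [hb]
      have hE : (((N : ℝ) + 1) ^ (d + 1)) ≠ 0 := by positivity
      have hN1 : ((N : ℝ) + 1) ≠ 0 := by positivity
      field_simp
    rw [← keyeq]
    exact key
  -- the limit of b
  have h1 : Tendsto (fun N : ℕ => Real.log KK / (((N : ℝ) + 1) * (vol mr : ℝ))) atTop
      (𝓝 0) := by
    have h0 := tendsto_one_div_add_atTop_nhds_zero_nat.const_mul (Real.log KK / (vol mr : ℝ))
    rw [mul_zero] at h0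
    refine Filter.Tendsto.congr (fun N => ?_) h0
    rw [mul_one_div, div_div, mul_comm ((vol mr : ℝ)) (((N : ℝ) + 1))]
  have h2 : Tendsto (fun N : ℕ => Real.log ‖A ^ N‖ / (((N : ℝ) + 1) * (vol mr : ℝ))) atTop
      (𝓝 (Real.log r / (vol mr : ℝ))) := by
    have h0 := hq.div_const (vol mr : ℝ)
    refine Filter.Tendsto.congr (fun N => ?_) h0
    rw [div_div]
  have hbten : Tendsto b atTop (𝓝 (Real.log r / (vol mr : ℝ))) := by
    have h3 := h1.add h2
    rw [zero_add] at h3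
    refine Filter.Tendsto.congr (fun N => ?_) h3
    rw [hb]
    rw [← add_div]
  have haten : Tendsto a atTop (𝓝 (P u)) := (hP u).comp hmf
  exact le_of_tendsto_of_tendsto' haten hbten hab

end Soft
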